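/- Let E be a finite set and α : 2^E → 2^E an operator. Then α is the rank closure operator of some greedoid on E if and only if α satisfies: (G1) X ⊆ α(X) for all X ⊆ E (extensivity); (G2) X ⊆ Y ⊆ α(X) implies α(X) = α(Y) (self-convexity); and (G3) for all X ⊆ E and distinct x, y ∉ X, if α(X ∪ {y}) = α(X ∪ {x, y}) but α(X ∪ {x}) ≠ α(X ∪ {x, y}), then there exists z ∈ X ∪ {x} with α(X ∪ {x} \ {z}) = α(X ∪ {x}). -/

import Mathlib

/-- A greedoid on `E`: `∅` is feasible and larger feasible sets augment smaller ones. -/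
def IsGreedoid {E : Type*} (F : Set (Set E)) : Prop :=
  ∅ ∈ F ∧ ∀ X ∈ F, ∀ Y ∈ F, Y.ncard < X.ncard → ∃ x ∈ X \ Y, insert x Y ∈ F

/-- The rank function of a set system: `r X = max {|A| : A ⊆ X, A ∈ F}`. -/
noncomputable def greedoidRank {E : Type*} (F : Set (Set E)) (X : Set E) : ℕ :=
  sSup {n | ∃ A ∈ F, A ⊆ X ∧ A.ncard = n}

/-- The rank closure operator `σ X = {x : r (X ∪ {x}) = r X}`. -/
noncomputable def rankClosure {E : Type*} (F : Set (Set E)) (X : Set E) : Set E :=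
  {x | greedoidRank F (insert x X) = greedoidRank F X}

namespace Stmt15Aux

variable {E : Type*}

/-- Extensivity. -/
def gOne (γ : Set E → Set E) : Prop := ∀ X, X ⊆ γ X

/-- Self-convexity. -/
def gTwo (γ : Set E → Set E) : Prop := ∀ X Y : Set E, X ⊆ Y → Y ⊆ γ X → γ X = γ Y

/-- Accessible sets relative to an operator. -/
inductive GAcc (γ : Set E → Set E) : Set E → Prop
  | empty : GAcc γ ∅
  | step {A : Set E} {x : E} : GAcc γ A → x ∉ γ A → GAcc γ (insert x A)

/-- Weak exchange-type consequence of (G3). -/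
def gThree (γ : Set E → Set E) : Prop :=
  ∀ (X : Set E) (x y : E), x ≠ y → x ∉ X → y ∉ X → GAcc γ (insert x X) →
    x ∈ γ (insert y X) → y ∈ γ (insert x X)

variable {γ : Set E → Set E}

lemma gtwo_insert (g1 : gOne γ) (g2 : gTwo γ) {X : Set E} {z : E} (hz : z ∈ γ X) :
    γ (insert z X) = γ X :=
  (g2 X (insert z X) (Set.subset_insert z X) (Set.insert_subset hz (g1 X))).symm

lemma gacc_free (g1 : gOne γ) (g3 : gThree γ) {A : Set E} (hA : GAcc γ A) :
    ∀ z ∈ A, z ∉ γ (A \ {z}) := by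
  induction hA with
  | empty => simp
  | @step A x hA hx IH =>
    have hxA : x ∉ A := fun h => hx (g1 A h)
    intro z hz hmem
    rcases Set.mem_insert_iff.1 hz with rfl | hzA
    · rw [Set.insert_diff_self_of_notMem hxA] at hmem; exact hx hmem
    · have hzx : z ≠ x := fun h => hxA (h ▸ hzA)
      rw [← Set.insert_diff_singleton_comm hzx.symm] at hmem
      have hAeq : insert z (A \ {z}) = A := by
        rw [Set.insert_diff_singleton, Set.insert_eq_self.2 hzA]
      have := g3 (A \ {z}) z x hzx (by simp) (fun h => hxA h.1) (by rw [hAeq]; exact hA) hmem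
      rw [hAeq] at this
      exact hx this

lemma gacc_notmem_insert (g1 : gOne γ) (g3 : gThree γ) {A : Set E} {z : E}
    (hz : z ∉ A) (h : GAcc γ (insert z A)) : z ∉ γ A := by
  have := gacc_free g1 g3 h z (Set.mem_insert z A)
  rwa [Set.insert_diff_self_of_notMem hz] at this

lemma gacc_transfer (g1 : gOne γ) {c : E} (hc : c ∉ γ ∅) {D : Set E}
    (hD : GAcc (fun Y => γ (insert c Y)) D) : c ∉ D ∧ GAcc γ (insert c D) := by
  induction hD with
  | empty => exact ⟨Set.notMem_empty c, GAcc.step GAcc.empty hc⟩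
  | @step D x hD hx IH =>
    have hx' : x ∉ γ (insert c D) := hx
    have hxc : x ≠ c := by
      intro h; exact hx' (h ▸ g1 (insert c D) (Set.mem_insert c D))
    refine ⟨fun h => (Set.mem_insert_iff.1 h).elim (fun h' => hxc h'.symm) IH.1, ?_⟩
    rw [Set.insert_comm]
    exact GAcc.step IH.2 hx'

lemma rel_gOne (g1 : gOne γ) (c : E) : gOne (fun Y => γ (insert c Y)) :=
  fun X => (Set.subset_insert c X).trans (g1 _)

lemma rel_gTwo (g1 : gOne γ) (g2 : gTwo γ) (c : E) : gTwo (fun Y => γ (insert c Y)) := by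
  intro X Y hXY hY
  exact g2 (insert c X) (insert c Y) (Set.insert_subset_insert hXY)
    (Set.insert_subset (g1 _ (Set.mem_insert c X)) hY)

lemma rel_gThree (g1 : gOne γ) (g3 : gThree γ) {c : E} (hc : c ∉ γ ∅) :
    gThree (fun Y => γ (insert c Y)) := by
  intro X x y hxy hxX hyX hacc hxmem
  obtain ⟨hcX, hacc'⟩ := gacc_transfer g1 hc hacc
  by_cases hyc : y = c
  · subst hyc
    exact g1 _ (Set.mem_insert y _)
  · have hx' : x ∉ insert c X := fun h =>
      (Set.mem_insert_iff.1 h).elim (fun h' => hcX (h' ▸ Set.mem_insert x X)) hxX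
    have hy' : y ∉ insert c X := fun h => (Set.mem_insert_iff.1 h).elim hyc hyX
    have h4 : GAcc γ (insert x (insert c X)) := by rwa [Set.insert_comm]
    have h5 : x ∈ γ (insert y (insert c X)) := by
      rw [Set.insert_comm]; exact hxmem
    have := g3 (insert c X) x y hxy hx' hy' h4 h5
    show y ∈ γ (insert c (insert x X))
    rwa [Set.insert_comm] at this

lemma gacc_first (g1 : gOne γ) {C : Set E} (hC : GAcc γ C) :
    C = ∅ ∨ ∃ c ∈ C, c ∉ γ ∅ ∧ GAcc (fun Y => γ (insert c Y)) (C \ {c}) := by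
  induction hC with
  | empty => exact Or.inl rfl
  | @step A x hA hx IH =>
    right
    rcases IH with rfl | ⟨c, hcA, hc0, hrel⟩
    · refine ⟨x, Set.mem_insert x ∅, hx, ?_⟩
      rw [show insert x (∅ : Set E) \ {x} = ∅ by simp]
      exact GAcc.empty
    · have hxA : x ∉ A := fun h => hx (g1 A h)
      have hxc : x ≠ c := fun h => hxA (h ▸ hcA)
      refine ⟨c, Set.mem_insert_of_mem x hcA, hc0, ?_⟩
      rw [← Set.insert_diff_singleton_comm hxc]
      refine GAcc.step hrel ?_
      show x ∉ γ (insert c (A \ {c}))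
      rwa [Set.insert_diff_singleton, Set.insert_eq_self.2 hcA]

lemma exists_max_gacc [Finite E] (g1 : gOne γ) (A : Set E) :
    ∃ B, GAcc γ B ∧ B ⊆ A ∧ A ⊆ γ B := by
  have hfin : {D : Set E | GAcc γ D ∧ D ⊆ A}.Finite := Set.toFinite _
  obtain ⟨B, hB, hmax⟩ := Set.Finite.exists_maximalFor id _ hfin
    ⟨∅, GAcc.empty, Set.empty_subset A⟩
  refine ⟨B, hB.1, hB.2, fun w hw => ?_⟩
  by_contra hwB
  have : B = insert w B := Set.Subset.antisymm (Set.subset_insert w B)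
    (hmax ⟨GAcc.step hB.1 hwB, Set.insert_subset hw hB.2⟩ (Set.subset_insert w B))
  exact hwB (g1 B (this ▸ Set.mem_insert w B))

theorem key_lemma [Fintype E] (n : ℕ) (γ : Set E → Set E) (g1 : gOne γ) (g2 : gTwo γ)
    (g3 : gThree γ) (A C : Set E) (hA : GAcc γ A) (hC : GAcc γ C) (hsub : C ⊆ γ A)
    (hn : C.ncard = n) : n ≤ A.ncard := by
  rcases gacc_first g1 hC with rfl | ⟨c, hcC, hc0, hrel⟩
  · simp [← hn]
  · have g1' := rel_gOne g1 c
    have g2' := rel_gTwo g1 g2 c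
    have g3' := rel_gThree g1 g3 hc0
    obtain ⟨B, hBacc, hBA, hABspan⟩ := exists_max_gacc g1' A
    have hcA : c ∈ γ A := hsub hcC
    have hβBA : γ (insert c B) = γ A := by
      have h1 : γ (insert c B) = γ (insert c A) := g2' B A hBA hABspan
      rw [h1, gtwo_insert g1 g2 hcA]
    have hsub' : C \ {c} ⊆ γ (insert c B) := by
      rw [hβBA]; exact Set.diff_subset.trans hsub
    have hcB : c ∉ B := (gacc_transfer g1 hc0 hBacc).1
    have hBne : B ≠ A := by
      rintro rfl
      exact gacc_notmem_insert g1 g3 hcB (gacc_transfer g1 hc0 hBacc).2 hcA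
    have hlt : B.ncard < A.ncard :=
      Set.ncard_lt_ncard (Set.ssubset_iff_subset_ne.2 ⟨hBA, hBne⟩) (Set.toFinite A)
    have hn1 : (C \ {c}).ncard = n - 1 := by
      rw [Set.ncard_diff_singleton_of_mem hcC, hn]
    have hpos : 0 < n := by
      rw [← hn]; exact (Set.ncard_pos (Set.toFinite _)).2 ⟨c, hcC⟩
    have hrec := key_lemma (n - 1) (fun Y => γ (insert c Y)) g1' g2' g3' B (C \ {c})
      hBacc hrel hsub' hn1
    omega
termination_by n
decreasing_by omega

section Rank

variable [Fintype E] {F : Set (Set E)}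

lemma bddAbove_rankSet (F : Set (Set E)) (X : Set E) :
    BddAbove {n | ∃ A ∈ F, A ⊆ X ∧ A.ncard = n} := by
  refine ⟨Fintype.card E, ?_⟩
  rintro n ⟨A, hA, hAX, rfl⟩
  have := Set.ncard_le_ncard (Set.subset_univ A) Set.finite_univ
  simpa [Set.ncard_univ, Nat.card_eq_fintype_card] using this

lemma le_rank {A X : Set E} (hA : A ∈ F) (hAX : A ⊆ X) : A.ncard ≤ greedoidRank F X :=
  le_csSup (bddAbove_rankSet F X) ⟨A, hA, hAX, rfl⟩

lemma rank_le (h0 : ∅ ∈ F) {X : Set E} {m : ℕ} (h : ∀ A ∈ F, A ⊆ X → A.ncard ≤ m) :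
    greedoidRank F X ≤ m := by
  refine csSup_le ⟨0, ∅, h0, Set.empty_subset X, by simp⟩ ?_
  rintro n ⟨A, hA, hAX, rfl⟩
  exact h A hA hAX

lemma rank_attained (h0 : ∅ ∈ F) (X : Set E) :
    ∃ A ∈ F, A ⊆ X ∧ A.ncard = greedoidRank F X := by
  have h := Nat.sSup_mem (s := {n | ∃ A ∈ F, A ⊆ X ∧ A.ncard = n})
    ⟨0, ∅, h0, Set.empty_subset X, by simp⟩ (bddAbove_rankSet F X)
  exact h

lemma rank_mono (h0 : ∅ ∈ F) {X Y : Set E} (hXY : X ⊆ Y) :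
    greedoidRank F X ≤ greedoidRank F Y := by
  obtain ⟨A, hA, hAX, hcard⟩ := rank_attained h0 X
  rw [← hcard]; exact le_rank hA (hAX.trans hXY)

lemma rank_le_ncard (h0 : ∅ ∈ F) (X : Set E) : greedoidRank F X ≤ X.ncard :=
  rank_le h0 (fun A _ hAX => Set.ncard_le_ncard hAX (Set.toFinite X))

lemma mem_rankClosure {X : Set E} {z : E} :
    z ∈ rankClosure F X ↔ greedoidRank F (insert z X) = greedoidRank F X := Iff.rfl

/-- forward: extensivity -/
lemma fwd_g1 (X : Set E) : X ⊆ rankClosure F X := by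
  intro z hz
  rw [mem_rankClosure, Set.insert_eq_self.2 hz]

lemma fwd_core (hG : IsGreedoid F) {X Z B : Set E} (hB : B ∈ F) (hBX : B ⊆ X)
    (hBr : B.ncard = greedoidRank F X)
    (hZ : ∀ w ∈ Z, greedoidRank F (insert w X) = greedoidRank F X) :
    ∀ C ∈ F, C ⊆ Z → C.ncard ≤ B.ncard := by
  intro C hC hCZ
  by_contra h
  obtain ⟨u, hu, hins⟩ := hG.2 C hC B hB (by omega)
  have h1 : (insert u B).ncard = B.ncard + 1 := Set.ncard_insert_of_notMem hu.2
  have h2 : insert u B ⊆ insert u X := Set.insert_subset_insert hBX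
  have h3 := le_rank hins h2
  rw [h1, hZ u (hCZ hu.1), ← hBr] at h3
  omega

/-- forward: self-convexity -/
lemma fwd_g2 (hG : IsGreedoid F) {X Y : Set E} (hXY : X ⊆ Y) (hY : Y ⊆ rankClosure F X) :
    rankClosure F X = rankClosure F Y := by
  obtain ⟨B, hB, hBX, hBr⟩ := rank_attained hG.1 X
  have hrY : greedoidRank F Y = greedoidRank F X := by
    refine le_antisymm ?_ (rank_mono hG.1 hXY)
    rw [← hBr]
    refine rank_le hG.1 (fwd_core hG hB hBX hBr (fun w hw => hY hw))
  ext z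
  rw [mem_rankClosure, mem_rankClosure, hrY]
  constructor
  · intro hz
    have hge : greedoidRank F X ≤ greedoidRank F (insert z Y) := by
      rw [← hrY]; exact rank_mono hG.1 (Set.subset_insert z Y)
    refine le_antisymm ?_ hge
    rw [← hBr]
    refine rank_le hG.1 (fwd_core hG hB hBX hBr ?_)
    intro w hw
    rcases Set.mem_insert_iff.1 hw with rfl | hwY
    · exact hz
    · exact hY hwY
  · intro hz
    refine le_antisymm ?_ (rank_mono hG.1 (Set.subset_insert z X))
    calc greedoidRank F (insert z X) ≤ greedoidRank F (insert z Y) :=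
        rank_mono hG.1 (Set.insert_subset_insert hXY)
      _ = greedoidRank F X := hz

/-- forward: the exchange axiom (G3) -/
lemma fwd_g3 (hG : IsGreedoid F) (X : Set E) (x y : E) (hxy : x ≠ y) (hxX : x ∉ X)
    (hyX : y ∉ X) (h1 : rankClosure F (insert y X) = rankClosure F (insert x (insert y X)))
    (h2 : rankClosure F (insert x X) ≠ rankClosure F (insert x (insert y X))) :
    ∃ z ∈ insert x X, rankClosure F ((insert x X) \ {z}) = rankClosure F (insert x X) := by
  by_contra hcon
  push_neg at hcon
  set A := insert x X with hAdef
  have hyA : y ∉ A := fun h => (Set.mem_insert_iff.1 h).elim (fun h' => hxy h'.symm) hyX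
  have hcomm : insert y A = insert x (insert y X) := Set.insert_comm y x X
  -- Step 1: A ∈ F
  obtain ⟨B, hB, hBA, hBr⟩ := rank_attained hG.1 A
  have hBeqA : B = A := by
    by_contra hne
    obtain ⟨z, hzA, hzB⟩ := Set.exists_of_ssubset (Set.ssubset_iff_subset_ne.2 ⟨hBA, hne⟩)
    have hBz : B ⊆ A \ {z} := Set.subset_diff_singleton hBA hzB
    have hr1 : greedoidRank F (A \ {z}) = greedoidRank F A := by
      refine le_antisymm (rank_mono hG.1 Set.diff_subset) ?_
      rw [← hBr]; exact le_rank hB hBz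
    have hsub : A ⊆ rankClosure F (A \ {z}) := by
      intro w hw
      rw [mem_rankClosure, hr1]
      refine le_antisymm ?_ ?_
      · exact rank_mono hG.1 (Set.insert_subset hw Set.diff_subset)
      · rw [← hr1]
        exact rank_mono hG.1 (Set.subset_insert w _)
    exact hcon z hzA (fwd_g2 hG Set.diff_subset hsub)
  subst hBeqA
  -- Step 2: y ∉ rankClosure F A
  have hyr : greedoidRank F (insert y A) ≠ greedoidRank F A := by
    intro heq
    have hsub : insert y A ⊆ rankClosure F A :=
      Set.insert_subset (mem_rankClosure.2 heq) (fwd_g1 A)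
    have := fwd_g2 hG (Set.subset_insert y A) hsub
    rw [hcomm] at this
    exact h2 this
  -- Step 3: insert y A ∈ F
  have hcardyA : (insert y A).ncard = A.ncard + 1 := Set.ncard_insert_of_notMem hyA
  have hryA : greedoidRank F (insert y A) = A.ncard + 1 := by
    have hle := rank_le_ncard hG.1 (insert y A)
    have hge : A.ncard ≤ greedoidRank F (insert y A) := by
      rw [hBr]; exact rank_mono hG.1 (Set.subset_insert y A)
    rw [hcardyA] at hle
    rw [← hBr] at hyr
    omega
  obtain ⟨C, hC, hCsub, hCr⟩ := rank_attained hG.1 (insert y A)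
  have hCeq : C = insert y A := by
    refine Set.eq_of_subset_of_ncard_le hCsub ?_ (Set.toFinite _)
    rw [hCr, hryA, hcardyA]
  -- Step 4: contradiction via h1
  have hx1 : x ∈ rankClosure F (insert y X) := by
    rw [h1]
    exact fwd_g1 _ (Set.mem_insert x (insert y X))
  have hx2 : greedoidRank F (insert x (insert y X)) = greedoidRank F (insert y X) :=
    mem_rankClosure.1 hx1
  rw [← hcomm] at hx2
  have hcardX : A.ncard = X.ncard + 1 := Set.ncard_insert_of_notMem hxX
  have hbig : greedoidRank F (insert y X) ≤ X.ncard + 1 := by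
    have := rank_le_ncard hG.1 (insert y X)
    rwa [Set.ncard_insert_of_notMem hyX] at this
  rw [hryA] at hx2
  omega

end Rank

end Stmt15Aux

open Stmt15Aux in
theorem stmt15 {E : Type*} [Fintype E] (α : Set E → Set E) :
    (∃ F : Set (Set E), IsGreedoid F ∧ α = rankClosure F) ↔
      ((∀ X : Set E, X ⊆ α X) ∧
       (∀ X Y : Set E, X ⊆ Y → Y ⊆ α X → α X = α Y) ∧
       (∀ (X : Set E) (x y : E), x ≠ y → x ∉ X → y ∉ X →
         α (insert y X) = α (insert x (insert y X)) →
         α (insert x X) ≠ α (insert x (insert y X)) →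
         ∃ z ∈ insert x X, α ((insert x X) \ {z}) = α (insert x X))) := by
  constructor
  · rintro ⟨F, hG, rfl⟩
    exact ⟨fwd_g1, fun X Y => fwd_g2 hG, fwd_g3 hG⟩
  · rintro ⟨hg1, hg2, hg3⟩
    -- derived: accessible sets are free, w.r.t. the original axiom (G3)
    have hfree : ∀ {A : Set E}, GAcc α A → ∀ z ∈ A, z ∉ α (A \ {z}) := by
      intro A hA
      induction hA with
      | empty => simp
      | @step A x hA hx IH =>
        have hxA : x ∉ A := fun h => hx (hg1 A h)
        intro z hz hmem
        rcases Set.mem_insert_iff.1 hz with rfl | hzA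
        · rw [Set.insert_diff_self_of_notMem hxA] at hmem; exact hx hmem
        · have hzx : z ≠ x := fun h => hxA (h ▸ hzA)
          rw [← Set.insert_diff_singleton_comm hzx.symm] at hmem
          have hAeq : insert z (A \ {z}) = A := by
            rw [Set.insert_diff_singleton, Set.insert_eq_self.2 hzA]
          have hh1 : α (insert x (A \ {z})) = α (insert z (insert x (A \ {z}))) :=
            hg2 _ _ (Set.subset_insert z _) (Set.insert_subset hmem (hg1 _))
          have hh2 : α (insert z (A \ {z})) ≠ α (insert z (insert x (A \ {z}))) := by
            rw [hAeq, Set.insert_comm, hAeq]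
            intro heq
            exact hx (heq ▸ hg1 (insert x A) (Set.mem_insert x A))
          obtain ⟨w, hw, hweq⟩ := hg3 (A \ {z}) z x hzx (by simp) (fun h => hxA h.1) hh1 hh2
          rw [hAeq] at hw hweq
          exact IH w hw (hweq ▸ hg1 A hw)
    have g3w : gThree α := by
      intro X x y hxy hxX hyX hacc hxmem
      by_contra hy
      have hh1 : α (insert y X) = α (insert x (insert y X)) :=
        hg2 _ _ (Set.subset_insert x _) (Set.insert_subset hxmem (hg1 _))
      have hh2 : α (insert x X) ≠ α (insert x (insert y X)) := by
        intro heq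
        exact hy (heq ▸ hg1 (insert x (insert y X))
          (Set.mem_insert_of_mem x (Set.mem_insert y X)))
      obtain ⟨z, hzA, hzeq⟩ := hg3 X x y hxy hxX hyX hh1 hh2
      exact hfree hacc z hzA (hzeq ▸ hg1 (insert x X) hzA)
    set F : Set (Set E) := {A | GAcc α A} with hF
    have h0F : ∅ ∈ F := GAcc.empty
    have hGr : IsGreedoid F := by
      refine ⟨h0F, ?_⟩
      intro Xs hX Ys hY hlt
      by_contra hcon
      push_neg at hcon
      have hsub : Xs ⊆ α Ys := by
        intro w hw
        by_cases hwY : w ∈ Ys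
        · exact hg1 Ys hwY
        · by_contra hwa
          exact hcon w ⟨hw, hwY⟩ (GAcc.step hY hwa)
      have := key_lemma Xs.ncard α hg1 hg2 g3w Ys Xs hY hX hsub rfl
      omega
    refine ⟨F, hGr, ?_⟩
    funext X
    obtain ⟨B, hBacc, hBX, hXspan⟩ := exists_max_gacc hg1 X
    have hαeq : α B = α X := hg2 B X hBX hXspan
    have hrankX : greedoidRank F X = B.ncard := by
      refine le_antisymm (rank_le h0F ?_) (le_rank hBacc hBX)
      intro A hA hAX
      exact key_lemma A.ncard α hg1 hg2 g3w B A hBacc hA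
        (hAX.trans (hXspan.trans (hαeq ▸ Set.Subset.rfl))) rfl
    ext z
    rw [mem_rankClosure, hrankX]
    constructor
    · intro hz
      refine le_antisymm ?_ ?_
      · refine rank_le h0F ?_
        intro A hA hAX
        refine key_lemma A.ncard α hg1 hg2 g3w B A hBacc hA ?_ rfl
        refine hAX.trans (Set.insert_subset ?_ ?_)
        · rw [hαeq]; exact hz
        · exact hXspan.trans (hαeq ▸ Set.Subset.rfl)
      · rw [← hrankX]
        exact rank_mono h0F (Set.subset_insert z X)
    · intro hz
      by_contra hzα
      have hzB : z ∉ α B := fun h => hzα (hαeq ▸ h)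
      have hins : GAcc α (insert z B) := GAcc.step hBacc hzB
      have hzBm : z ∉ B := fun h => hzB (hg1 B h)
      have := le_rank (F := F) hins (Set.insert_subset_insert hBX)
      rw [Set.ncard_insert_of_notMem hzBm, hz] at this
      omega
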